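/- Let E be a Hilbert space, M > 0, and Φ : 𝕋 → B(E) a measurable function such that for every integer n ≥ 1 one has ‖Φ(z)(1 − z^{2n})‖ ≤ M for almost every z ∈ 𝕋 (where 1 − z^{2n} acts as a scalar multiple of the identity). Then ‖Φ(z)‖ ≤ M/2 for almost every z ∈ 𝕋; in particular Φ ∈ L∞_{B(E)}(𝕋). -/

import Mathlib

open MeasureTheory Complex AddCircle
open scoped ENNReal Real

noncomputable section

namespace PaperTH

instance fact2pi : Fact (0 < 2 * Real.pi) := ⟨by positivity⟩

/-- The circle, as `ℝ / 2πℤ`. -/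
abbrev 𝕋c := AddCircle (2 * Real.pi)

/-- The normalized Lebesgue (Haar) measure on the circle. -/
abbrev μc : Measure 𝕋c := haarAddCircle

set_option maxHeartbeats 2000000

/-- For a unit-norm complex number that is not a root of unity, powers come
within `ε` of `-1`, hence `‖1 - wⁿ‖` comes within `ε` of `2`. -/
lemma key_arc (w : ℂ) (hw : ‖w‖ = 1) (hroot : ∀ n : ℕ, 1 ≤ n → w ^ n ≠ 1)
    {ε : ℝ} (hε : 0 < ε) : ∃ n : ℕ, 1 ≤ n ∧ 2 - ε ≤ ‖1 - w ^ n‖ := by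
  have hπ : (0:ℝ) < Real.pi := Real.pi_pos
  set ε' : ℝ := min ε 1 with hε'def
  have hε' : 0 < ε' := lt_min hε one_pos
  have hε'1 : ε' ≤ 1 := min_le_right _ _
  have hε'ε : ε' ≤ ε := min_le_left _ _
  set δ : ℝ := ε' / Real.pi with hδdef
  have hδ : 0 < δ := by positivity
  -- pigeonhole: two powers δ-close
  have hbdd : ∀ n : ℕ, w ^ n ∈ Metric.closedBall (0:ℂ) 1 := by
    intro n; simp [norm_pow, hw]
  obtain ⟨a, -, φ, hφ, hconv⟩ :=
    tendsto_subseq_of_bounded Metric.isBounded_closedBall hbdd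
  rw [Metric.tendsto_atTop] at hconv
  obtain ⟨K, hK⟩ := hconv (δ/2) (by positivity)
  have hlt : φ K < φ (K+1) := hφ (Nat.lt_succ_self K)
  set N : ℕ := φ (K+1) - φ K with hNdef
  have hN1 : 1 ≤ N := by omega
  have hNsmall : ‖1 - w ^ N‖ < δ := by
    have h1 : w ^ (φ K) * (1 - w ^ N) = w ^ (φ K) - w ^ (φ (K+1)) := by
      rw [mul_sub, mul_one, ← pow_add]
      congr 2
      omega
    have h2 : ‖w ^ (φ K) * (1 - w ^ N)‖ = ‖1 - w ^ N‖ := by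
      rw [norm_mul, norm_pow, hw, one_pow, one_mul]
    rw [← h2, h1]
    calc ‖w ^ (φ K) - w ^ (φ (K+1))‖
        ≤ ‖w ^ (φ K) - a‖ + ‖a - w ^ (φ (K+1))‖ := norm_sub_le_norm_sub_add_norm_sub _ _ _
      _ < δ/2 + δ/2 := by
          have h3 := hK K le_rfl
          have h4 := hK (K+1) (Nat.le_succ K)
          rw [dist_eq_norm] at h3 h4
          rw [norm_sub_rev (a := a)]
          exact add_lt_add h3 h4
      _ = δ := by ring
  set v : ℂ := w ^ N with hvdef
  have hv1 : v ≠ 1 := hroot N hN1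
  have hvabs : ‖v‖ = 1 := by rw [hvdef, norm_pow, hw, one_pow]
  set γ : ℝ := v.arg with hγdef
  have hvexp : v = Complex.exp (γ * I) := by
    have := Complex.norm_mul_exp_arg_mul_I v
    rw [hvabs] at this
    simpa using this.symm
  have hγ0 : γ ≠ 0 := by
    intro h
    rw [h] at hvexp
    simp at hvexp
    exact hv1 hvexp
  have hγπ : |γ| ≤ Real.pi := Complex.abs_arg_le_pi v
  have hv0 : v ≠ 0 := by
    intro h; rw [h] at hvabs; simp at hvabs
  -- ‖1 - v‖² = 2 - 2 cos γ
  have hre : v.re = Real.cos γ := by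
    have := Complex.cos_arg hv0
    rw [hvabs, div_one] at this
    exact this.symm
  have him : v.im = Real.sin γ := by
    have := Complex.sin_arg v
    rw [hvabs, div_one] at this
    exact this.symm
  have hnormsq : ‖1 - v‖^2 = 2 - 2 * Real.cos γ := by
    have : ‖1 - v‖^2 = (1 - v).re^2 + (1 - v).im^2 := by
      rw [Complex.sq_norm, Complex.normSq_apply]; ring
    rw [this, Complex.sub_re, Complex.sub_im, Complex.one_re, Complex.one_im, hre, him]
    nlinarith [Real.sin_sq_add_cos_sq γ]
  -- |γ| < ε'/2
  have hγsmall : |γ| < ε' / 2 := by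
    have hc := Real.cos_le_one_sub_mul_cos_sq hγπ
    have h1 : (2 / Real.pi * |γ|)^2 ≤ ‖1 - v‖^2 := by
      rw [hnormsq]
      have hsq : |γ|^2 = γ^2 := _root_.sq_abs γ
      have hπ2 : (0:ℝ) < Real.pi^2 := by positivity
      have hππ : Real.pi^2 * (2/Real.pi^2) = 2 := by field_simp
      rw [div_mul_eq_mul_div, div_pow, div_le_iff₀ hπ2]
      nlinarith [hc, hsq, hππ, hπ2]
    have h2 : ‖1 - v‖^2 < δ^2 := by
      have := hNsmall
      nlinarith [norm_nonneg (1 - v)]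
    have h3 : 2 / Real.pi * |γ| < δ := by
      have h4 : (2 / Real.pi * |γ|)^2 < δ^2 := lt_of_le_of_lt h1 h2
      exact lt_of_pow_lt_pow_left₀ 2 hδ.le h4
    rw [hδdef] at h3
    rw [div_mul_eq_mul_div, div_lt_div_iff₀ hπ hπ] at h3
    nlinarith
  have hγpos : 0 < |γ| := abs_pos.mpr hγ0
  -- choose k
  set k : ℕ := ⌈Real.pi / |γ|⌉₊ with hkdef
  have hk1 : 1 ≤ k := Nat.one_le_ceil_iff.mpr (by positivity)
  have hklow : Real.pi ≤ k * |γ| := by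
    have := Nat.le_ceil (Real.pi / |γ|)
    rw [div_le_iff₀ hγpos] at this
    exact this
  have hkhigh : (k:ℝ) * |γ| < Real.pi + |γ| := by
    have := Nat.ceil_lt_add_one (a := Real.pi / |γ|) (by positivity)
    calc (k:ℝ) * |γ| < (Real.pi / |γ| + 1) * |γ| := by
          apply mul_lt_mul_of_pos_right this hγpos
      _ = Real.pi + |γ| := by field_simp
  set s : ℝ := if 0 ≤ γ then 1 else -1 with hsdef
  have hkγ : (k:ℝ) * γ = s * (k * |γ|) := by
    rcases le_or_gt 0 γ with h | h
    · rw [hsdef, if_pos h, _root_.abs_of_nonneg h]; ring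
    · rw [hsdef, if_neg (not_le.mpr h), _root_.abs_of_neg h]; ring
  have hexps : Complex.exp ((s * Real.pi) * I) = -1 := by
    rcases le_or_gt 0 γ with h | h
    · rw [hsdef, if_pos h]; push_cast; rw [one_mul]; exact Complex.exp_pi_mul_I
    · rw [hsdef, if_neg (not_le.mpr h)]
      push_cast
      rw [show ((-1:ℂ) * Real.pi * I) = -(Real.pi * I) by ring, Complex.exp_neg,
        Complex.exp_pi_mul_I]
      norm_num
  have hvk : v ^ k = Complex.exp (((k:ℝ) * γ) * I) := by
    rw [hvexp, ← Complex.exp_nat_mul]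
    congr 1
    push_cast
    ring
  have hdist : ‖v ^ k + 1‖ ≤ 2 * |γ| := by
    have harg : ((k:ℝ) * γ) - s * Real.pi = s * ((k:ℝ) * |γ| - Real.pi) := by
      rw [hkγ]; ring
    have habs_s : |s| = 1 := by
      rcases le_or_gt 0 γ with h | h
      · rw [hsdef, if_pos h]; norm_num
      · rw [hsdef, if_neg (not_le.mpr h)]; norm_num
    have hargabs : |((k:ℝ) * γ) - s * Real.pi| ≤ |γ| := by
      rw [harg, abs_mul, habs_s, one_mul, _root_.abs_of_nonneg (by linarith : (0:ℝ) ≤ (k:ℝ) * |γ| - Real.pi)]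
      linarith
    have key : v ^ k + 1 = Complex.exp ((s*Real.pi) * I) *
        (Complex.exp ((((k:ℝ) * γ) - s * Real.pi) * I) - 1) := by
      rw [hvk, mul_sub, mul_one, ← Complex.exp_add, hexps]
      push_cast
      ring_nf
    have hcast : ((((k:ℝ)):ℂ) * (γ:ℂ) - (s:ℂ) * (Real.pi:ℂ)) = ((((k:ℝ) * γ - s * Real.pi : ℝ)) : ℂ) := by
      push_cast; ring
    rw [hcast] at key
    have h5 : ‖(((((k:ℝ) * γ - s * Real.pi : ℝ)) : ℂ) * I)‖ ≤ 1 := by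
      rw [norm_mul, Complex.norm_I, mul_one, Complex.norm_real, Real.norm_eq_abs]
      calc |((k:ℝ) * γ) - s * Real.pi| ≤ |γ| := hargabs
        _ ≤ 1 := by linarith [hγsmall, hε'1]
    have h6 := Complex.norm_exp_sub_one_le h5
    rw [norm_mul, Complex.norm_I, mul_one, Complex.norm_real, Real.norm_eq_abs] at h6
    rw [key, norm_mul, hexps, norm_neg, norm_one, one_mul]
    calc ‖Complex.exp (((((k:ℝ) * γ - s * Real.pi : ℝ)) : ℂ) * I) - 1‖
        ≤ 2 * |((k:ℝ) * γ) - s * Real.pi| := h6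
      _ ≤ 2 * |γ| := by linarith
  refine ⟨N * k, Nat.one_le_iff_ne_zero.mpr (by positivity), ?_⟩
  have hwNk : w ^ (N * k) = v ^ k := by rw [hvdef, ← pow_mul]
  rw [hwNk]
  have : (1 : ℂ) - v ^ k = 2 - (v ^ k + 1) := by ring
  rw [this]
  calc (2:ℝ) - ε ≤ 2 - ε' := by linarith
    _ ≤ 2 - 2 * |γ| := by linarith
    _ ≤ ‖(2:ℂ)‖ - ‖v ^ k + 1‖ := by
        rw [show ‖(2:ℂ)‖ = 2 by norm_num]
        linarith
    _ ≤ ‖(2:ℂ) - (v ^ k + 1)‖ := norm_sub_norm_le _ _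

/-- The normalized Haar measure on the circle has no atoms. -/
instance : NullSingletonClass μc := by
  constructor
  intro x
  have h := AddCircle.volume_closedBall (T := 2*Real.pi) (x := x) 0
  rw [Metric.closedBall_zero, mul_zero] at h
  rw [min_eq_right (by positivity : (0:ℝ) ≤ 2*Real.pi), ENNReal.ofReal_zero] at h
  have h2 : (volume : Measure 𝕋c) = ENNReal.ofReal (2*Real.pi) • μc :=
    AddCircle.volume_eq_smul_haarAddCircle
  rw [h2, Measure.smul_apply, smul_eq_mul] at h
  rcases mul_eq_zero.mp h with h3 | h3
  · exfalso
    rw [ENNReal.ofReal_eq_zero] at h3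
    nlinarith [Real.pi_pos]
  · exact h3

/-- The set of finite-order points of the circle is countable. -/
lemma torsion_countable : Set.Countable {x : 𝕋c | IsOfFinAddOrder x} := by
  have hsub : {x : 𝕋c | IsOfFinAddOrder x} ⊆
      Set.range (fun q : ℚ => (((q : ℝ) * (2*Real.pi) : ℝ) : 𝕋c)) := by
    intro u hu
    obtain ⟨m, -, -, he⟩ := AddCircle.exists_gcd_eq_one_of_isOfFinAddOrder hu
    refine ⟨(m : ℚ) / (addOrderOf u : ℚ), ?_⟩
    have hre : ((((m : ℚ) / (addOrderOf u : ℚ) : ℚ) : ℝ)) = (m : ℝ) / (addOrderOf u : ℝ) := by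
      push_cast; ring
    show ((((((m : ℚ) / (addOrderOf u : ℚ) : ℚ) : ℝ)) * (2*Real.pi) : ℝ) : 𝕋c) = u
    rw [hre, he]
  exact Set.Countable.mono hsub (Set.countable_range _)

lemma torsion_null : μc {x : 𝕋c | IsOfFinAddOrder x} = 0 :=
  Set.Countable.measure_zero torsion_countable _

/-- **Lemma.** Let `E` be a Hilbert space, `M > 0`, and let `Φ : 𝕋 → B(E)` be measurable with
`‖Φ(z)(1 - z^{2n})‖ ≤ M` a.e. for every `n ≥ 1`. Then `‖Φ(z)‖ ≤ M/2` a.e.; in particular,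
`Φ ∈ L∞_{B(E)}(𝕋)`. -/
theorem ess_bound_of_bound_mul_one_sub_pow {E : Type*} [NormedAddCommGroup E]
    [InnerProductSpace ℂ E] [CompleteSpace E] (M : ℝ) (hM : 0 < M)
    (Φ : 𝕋c → (E →L[ℂ] E)) (hmeas : AEStronglyMeasurable Φ μc)
    (hbd : ∀ n : ℕ, 1 ≤ n → ∀ᵐ x ∂μc, ‖(1 - fourier (2 * (n : ℤ)) x) • Φ x‖ ≤ M) :
    (∀ᵐ x ∂μc, ‖Φ x‖ ≤ M / 2) ∧ MemLp Φ ∞ μc := by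
  have hae1 : ∀ᵐ x ∂μc, ∀ n : ℕ, 1 ≤ n → ‖(1 - fourier (2 * (n:ℤ)) x) • Φ x‖ ≤ M := by
    rw [ae_all_iff]
    intro n
    rcases le_or_gt 1 n with hn | hn
    · filter_upwards [hbd n hn] with x h _
      exact h
    · filter_upwards with x h
      omega
  have htor : ∀ᵐ x ∂μc, ¬ IsOfFinAddOrder x := by
    rw [ae_iff]
    simpa [not_not] using torsion_null
  have key : ∀ᵐ x ∂μc, ‖Φ x‖ ≤ M / 2 := by
    filter_upwards [hae1, htor] with x hx hxt
    set w : ℂ := fourier 2 x with hwdef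
    have hwnorm : ‖w‖ = 1 := by
      rw [hwdef, fourier_apply]
      exact Circle.norm_coe _
    have hpow : ∀ n : ℕ, w ^ n = fourier (2 * (n:ℤ)) x := by
      intro n
      induction n with
      | zero => simp [fourier_zero]
      | succ n ih =>
        rw [pow_succ, ih,
          show ((2 * (((n+1:ℕ)) : ℤ))) = 2*(n:ℤ) + 2 from by push_cast; ring,
          fourier_add, hwdef]
    have hroot : ∀ n : ℕ, 1 ≤ n → w ^ n ≠ 1 := by
      intro n hn h1
      apply hxt
      rw [isOfFinAddOrder_iff_nsmul_eq_zero]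
      refine ⟨2 * n, by omega, ?_⟩
      have h2 := hpow n
      rw [h1] at h2
      rw [fourier_apply] at h2
      have h0 : ((2 * (n:ℤ)) • x) = 0 := by
        apply AddCircle.injective_toCircle (by positivity : (2*Real.pi) ≠ 0)
        rw [AddCircle.toCircle_zero]
        exact Circle.coe_injective (by rw [← h2, Circle.coe_one])
      calc (2 * n) • x = ((2 * (n:ℤ))) • x := by rw [← natCast_zsmul]; push_cast; ring_nf
        _ = 0 := h0
    have hM2 : 2 * ‖Φ x‖ ≤ M := by
      refine le_of_forall_pos_le_add fun δ hδ => ?_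
      set c : ℝ := ‖Φ x‖ with hcdef
      have hc0 : 0 ≤ c := norm_nonneg _
      set ε : ℝ := δ / (c + 1) with hεdef
      have hε : 0 < ε := by positivity
      obtain ⟨n, hn1, hn2⟩ := key_arc w hwnorm hroot hε
      have hb := hx n hn1
      rw [norm_smul, ← hpow n] at hb
      have hεc : ε * c ≤ δ := by
        rw [hεdef, div_mul_eq_mul_div, div_le_iff₀ (by positivity : (0:ℝ) < c + 1)]
        nlinarith
      have h3 : (2 - ε) * c ≤ ‖1 - w ^ n‖ * c :=
        mul_le_mul_of_nonneg_right hn2 hc0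
      nlinarith
    linarith [hM2]
  exact ⟨key, memLp_top_of_bound hmeas (M/2) key⟩


end PaperTH
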